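/- For every n ≥ 0, the denominator of b n is not divisible by 3. Moreover, for every n with 9 ∣ n and every i with 0 ≤ i ≤ 8, one has b (n+i) ≡ r i (mod 3), where (r 0, …, r 8) = (1, 1, 2, 1, 0, 2, 1, 2, 2); here a rational q whose denominator is prime to 3 satisfies q ≡ r (mod 3) if 3 divides q.num − r · q.den. -/

import Mathlib

/-- The ECHO sequence. -/
def echo : ℕ → ℚ
  | 0 => 1
  | 1 => 1
  | 2 => 2
  | 3 => 1
  | n + 4 =>
      (echo (n + 3) * echo (n + 1) - (if 3 ∣ (n + 4) then 3 else 1) * echo (n + 2) ^ 2) /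
        echo n

/-- The residues (1, 1, 2, 1, 0, 2, 1, 2, 2). -/
def rseq : ℕ → ℤ := fun i => ([1, 1, 2, 1, 0, 2, 1, 2, 2] : List ℤ).getD i 0

lemma echo_add_four (n : ℕ) :
    echo (n + 4) = (echo (n + 3) * echo (n + 1) -
      (if 3 ∣ (n + 4) then 3 else 1) * echo (n + 2) ^ 2) / echo n := rfl

lemma e0 : echo 0 = 1 := rfl
lemma e1 : echo 1 = 1 := rfl
lemma e2 : echo 2 = 2 := rfl
lemma e3 : echo 3 = 1 := rfl
lemma e4 : echo 4 = -3 := by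
  show echo (0 + 4) = -3
  rw [echo_add_four]; norm_num [e0, e1, e2, e3]
lemma e5 : echo 5 = -7 := by
  show echo (1 + 4) = -7
  rw [echo_add_four]; norm_num [e1, e2, e3, e4]

/-- `q` is `m`-integral with residue `r` mod `m`. -/
def Rm (m : ℤ) (q : ℚ) (r : ℤ) : Prop :=
  ∃ a b : ℤ, ¬ m ∣ b ∧ q * (b : ℚ) = (a : ℚ) ∧ m ∣ a - r * b

lemma step4 {m : ℤ} (hm : Prime m) {x0 x1 x2 x3 : ℚ} {c : ℚ} {r0 r1 r2 r3 : ℤ}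
    (ci r4 : ℤ) (hc : c = (ci : ℚ))
    (H0 : Rm m x0 r0) (H1 : Rm m x1 r1) (H2 : Rm m x2 r2) (H3 : Rm m x3 r3)
    (hr0 : ¬ m ∣ r0)
    (hk : m ∣ r3 * r1 - ci * r2 ^ 2 - r4 * r0) :
    Rm m ((x3 * x1 - c * x2 ^ 2) / x0) r4 := by
  obtain ⟨a0, b0, hb0, he0, hd0⟩ := H0
  obtain ⟨a1, b1, hb1, he1, hd1⟩ := H1
  obtain ⟨a2, b2, hb2, he2, hd2⟩ := H2
  obtain ⟨a3, b3, hb3, he3, hd3⟩ := H3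
  have ha0 : ¬ m ∣ a0 := by
    intro h
    have h2 : m ∣ r0 * b0 := by
      have := dvd_sub h hd0
      simpa using this
    rcases hm.dvd_mul.mp h2 with h3 | h3
    · exact hr0 h3
    · exact hb0 h3
  have ha0z : a0 ≠ 0 := fun h => ha0 (h ▸ dvd_zero m)
  have ha0Q : (a0 : ℚ) ≠ 0 := by exact_mod_cast ha0z
  have hb0Q : (b0 : ℚ) ≠ 0 := by
    have : b0 ≠ 0 := fun h => hb0 (h ▸ dvd_zero m)
    exact_mod_cast this
  have hx0 : x0 ≠ 0 := by
    intro h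
    rw [h, zero_mul] at he0
    exact ha0Q he0.symm
  refine ⟨(a3 * a1 * b2 ^ 2 - ci * a2 ^ 2 * b3 * b1) * b0, b3 * b1 * b2 ^ 2 * a0, ?_, ?_, ?_⟩
  · intro h
    rcases hm.dvd_mul.mp h with h | h
    · rcases hm.dvd_mul.mp h with h | h
      · rcases hm.dvd_mul.mp h with h | h
        · exact hb3 h
        · exact hb1 h
      · exact hb2 (hm.dvd_of_dvd_pow h)
    · exact ha0 h
  · rw [hc, div_mul_eq_mul_div, div_eq_iff hx0]
    push_cast
    rw [← he0, ← he1, ← he2, ← he3]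
    ring
  · obtain ⟨k0, hk0⟩ := hd0
    obtain ⟨k1, hk1⟩ := hd1
    obtain ⟨k2, hk2⟩ := hd2
    obtain ⟨k3, hk3⟩ := hd3
    obtain ⟨k5, hk5⟩ := hk
    exact ⟨b2 ^ 2 * b0 * a1 * k3 + r3 * b3 * b2 ^ 2 * b0 * k1
      - ci * b3 * b1 * b0 * (a2 + r2 * b2) * k2 - r4 * b3 * b1 * b2 ^ 2 * k0
      + b3 * b1 * b2 ^ 2 * b0 * k5, by
        linear_combination (b2 ^ 2 * b0 * a1) * hk3 + (r3 * b3 * b2 ^ 2 * b0) * hk1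
          - (ci * b3 * b1 * b0 * (a2 + r2 * b2)) * hk2 - (r4 * b3 * b1 * b2 ^ 2) * hk0
          + (b3 * b1 * b2 ^ 2 * b0) * hk5⟩

lemma step5 {m : ℤ} (hm : Prime m) {y x0 x1 x2 x3 x4 c : ℚ} {r0 r1 r2 r3 r4 : ℤ}
    (di r5 : ℤ) (hc : c = (di : ℚ))
    (hprod : y * x0 = c * (x4 * x1) + x3 * x2)
    (H0 : Rm m x0 r0) (H1 : Rm m x1 r1) (H2 : Rm m x2 r2) (H3 : Rm m x3 r3) (H4 : Rm m x4 r4)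
    (hr0 : ¬ m ∣ r0)
    (hk : m ∣ di * r4 * r1 + r3 * r2 - r5 * r0) :
    Rm m y r5 := by
  obtain ⟨a0, b0, hb0, he0, hd0⟩ := H0
  obtain ⟨a1, b1, hb1, he1, hd1⟩ := H1
  obtain ⟨a2, b2, hb2, he2, hd2⟩ := H2
  obtain ⟨a3, b3, hb3, he3, hd3⟩ := H3
  obtain ⟨a4, b4, hb4, he4, hd4⟩ := H4
  have ha0 : ¬ m ∣ a0 := by
    intro h
    have h2 : m ∣ r0 * b0 := by
      have := dvd_sub h hd0
      simpa using this
    rcases hm.dvd_mul.mp h2 with h3 | h3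
    · exact hr0 h3
    · exact hb0 h3
  refine ⟨(di * a4 * a1 * b3 * b2 + a3 * a2 * b4 * b1) * b0, b4 * b1 * b3 * b2 * a0, ?_, ?_, ?_⟩
  · intro h
    rcases hm.dvd_mul.mp h with h | h
    · rcases hm.dvd_mul.mp h with h | h
      · rcases hm.dvd_mul.mp h with h | h
        · rcases hm.dvd_mul.mp h with h | h
          · exact hb4 h
          · exact hb1 h
        · exact hb3 h
      · exact hb2 h
    · exact ha0 h
  · rw [hc] at hprod
    push_cast
    rw [← he0, ← he1, ← he2, ← he3, ← he4]
    linear_combination ((b4 : ℚ) * b1 * b3 * b2 * b0) * hprod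
  · obtain ⟨k0, hk0⟩ := hd0
    obtain ⟨k1, hk1⟩ := hd1
    obtain ⟨k2, hk2⟩ := hd2
    obtain ⟨k3, hk3⟩ := hd3
    obtain ⟨k4, hk4⟩ := hd4
    obtain ⟨k5, hk5⟩ := hk
    exact ⟨di * b3 * b2 * b0 * a1 * k4 + di * r4 * b4 * b3 * b2 * b0 * k1
      + b4 * b1 * b0 * a2 * k3 + r3 * b3 * b4 * b1 * b0 * k2
      - r5 * b4 * b1 * b3 * b2 * k0 + b4 * b1 * b3 * b2 * b0 * k5, by
        linear_combination (di * b3 * b2 * b0 * a1) * hk4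
          + (di * r4 * b4 * b3 * b2 * b0) * hk1 + (b4 * b1 * b0 * a2) * hk3
          + (r3 * b3 * b4 * b1 * b0) * hk2 - (r5 * b4 * b1 * b3 * b2) * hk0
          + (b4 * b1 * b3 * b2 * b0) * hk5⟩

/-- The residues of the ECHO sequence modulo 5 (period 24). -/
def s5 : ℕ → ℤ := fun i =>
  ([1,1,2,1,2,3,3,2,1,2,1,1,4,4,3,4,3,2,2,3,4,3,4,4] : List ℤ).getD i 0

lemma mod5 : ∀ n : ℕ, Rm 5 (echo n) (s5 (n % 24)) := by
  intro n
  induction n using Nat.strong_induction_on with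
  | _ n IH =>
    match n, IH with
    | 0, _ => exact ⟨1, 1, by decide, by norm_num [e0], by decide⟩
    | 1, _ => exact ⟨1, 1, by decide, by norm_num [e1], by decide⟩
    | 2, _ => exact ⟨2, 1, by decide, by norm_num [e2], by decide⟩
    | 3, _ => exact ⟨1, 1, by decide, by norm_num [e3], by decide⟩
    | (m+4), IH =>
      have H0 := IH m (by omega)
      have H1 := IH (m+1) (by omega)
      have H2 := IH (m+2) (by omega)
      have H3 := IH (m+3) (by omega)
      obtain ⟨j, hj, hjm⟩ : ∃ j, j < 24 ∧ m % 24 = j := ⟨m % 24, Nat.mod_lt _ (by norm_num), rfl⟩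
      rw [hjm] at H0
      rw [show (m+1) % 24 = (j+1) % 24 from by omega] at H1
      rw [show (m+2) % 24 = (j+2) % 24 from by omega] at H2
      rw [show (m+3) % 24 = (j+3) % 24 from by omega] at H3
      rw [echo_add_four, show (m+4) % 24 = (j+4) % 24 from by omega,
        show (if 3 ∣ (m+4) then (3:ℚ) else 1) = (if 3 ∣ (j+4) then (3:ℚ) else 1) from by
          by_cases h : 3 ∣ (m+4)
          · rw [if_pos h, if_pos (show 3 ∣ (j+4) from by omega)]
          · rw [if_neg h, if_neg (show ¬ 3 ∣ (j+4) from by omega)]]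
      refine step4 (by norm_num) (if 3 ∣ (j+4) then 3 else 1) (s5 ((j+4) % 24))
        (by split <;> norm_num) H0 H1 H2 H3 ?_ ?_
      · interval_cases j <;> decide
      · interval_cases j <;> decide

lemma echo_ne_zero (n : ℕ) : echo n ≠ 0 := by
  obtain ⟨a, b, hb, he, hd⟩ := mod5 n
  intro h0
  rw [h0, zero_mul] at he
  have ha : a = 0 := by exact_mod_cast he.symm
  subst ha
  have h5 : (5:ℤ) ∣ s5 (n % 24) * b := by
    simpa using (dvd_neg.mpr (by simpa using hd))
  have hp : Prime (5:ℤ) := by norm_num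
  rcases hp.dvd_mul.mp h5 with h | h
  · obtain ⟨j, hjlt, hje⟩ : ∃ j, j < 24 ∧ n % 24 = j := ⟨_, Nat.mod_lt _ (by norm_num), rfl⟩
    rw [hje] at h
    interval_cases j <;> revert h <;> decide
  · exact hb h

lemma S4prod (n : ℕ) : echo (n+4) * echo n =
    echo (n+3) * echo (n+1) - (if 3 ∣ (n+4) then (3:ℚ) else 1) * echo (n+2) ^ 2 := by
  rw [echo_add_four, div_mul_cancel₀ _ (echo_ne_zero n)]

lemma key {u v w x y z t c4 c5 c6 : ℚ}
    (hv : v ≠ 0) (hw : w ≠ 0)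
    (hA : y * u = x * v - c4 * w ^ 2)
    (hB : z * v = y * w - c5 * x ^ 2)
    (hC : t * w = z * x - c6 * y ^ 2)
    (h5 : z * u = c6 * (y * v) + x * w) :
    t * v = c4 * (z * w) + y * x := by
  have hs : (x * v - c4 * w ^ 2) * (y * w - c5 * x ^ 2)
      = c6 * (y * v) ^ 2 + (x * w) * (y * v) := by
    rw [← hA, ← hB]
    calc (y * u) * (z * v) = (z * u) * (y * v) := by ring
      _ = (c6 * (y * v) + x * w) * (y * v) := by rw [h5]
      _ = c6 * (y * v) ^ 2 + (x * w) * (y * v) := by ring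
  apply mul_right_cancel₀ (mul_ne_zero hw hv)
  linear_combination v ^ 2 * hC + (x * v - c4 * w ^ 2) * hB + hs

lemma S5 : ∀ n : ℕ, echo (n+5) * echo n =
    (if 3 ∣ (n+6) then (3:ℚ) else 1) * (echo (n+4) * echo (n+1)) + echo (n+3) * echo (n+2) := by
  intro n
  induction n with
  | zero => norm_num [e0, e1, e2, e3, e4, e5]
  | succ n ih =>
    have hA := S4prod n
    have hB := S4prod (n+1)
    have hC := S4prod (n+2)
    simp only [show n+1+4 = n+5 from by omega, show n+1+3 = n+4 from by omega,
      show n+1+2 = n+3 from by omega, show n+1+1 = n+2 from by omega,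
      show n+2+4 = n+6 from by omega, show n+2+3 = n+5 from by omega,
      show n+2+2 = n+4 from by omega, show n+2+1 = n+3 from by omega,
      show n+1+5 = n+6 from by omega, show n+1+6 = n+7 from by omega] at hB hC ⊢
    rw [show (if 3 ∣ (n+7) then (3:ℚ) else 1) = (if 3 ∣ (n+4) then (3:ℚ) else 1) from by
      by_cases h : 3 ∣ (n+4)
      · rw [if_pos h, if_pos (show 3 ∣ (n+7) from by omega)]
      · rw [if_neg h, if_neg (show ¬ 3 ∣ (n+7) from by omega)]]
    exact key (echo_ne_zero (n+1)) (echo_ne_zero (n+2)) hA hB hC ih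

lemma mod3 : ∀ n : ℕ, Rm 3 (echo n) (rseq (n % 9)) := by
  intro n
  induction n using Nat.strong_induction_on with
  | _ n IH =>
    match n, IH with
    | 0, _ => exact ⟨1, 1, by decide, by norm_num [e0], by decide⟩
    | 1, _ => exact ⟨1, 1, by decide, by norm_num [e1], by decide⟩
    | 2, _ => exact ⟨2, 1, by decide, by norm_num [e2], by decide⟩
    | 3, _ => exact ⟨1, 1, by decide, by norm_num [e3], by decide⟩
    | (m+4), IH =>
      have H0 := IH m (by omega)
      have H1 := IH (m+1) (by omega)
      have H2 := IH (m+2) (by omega)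
      have H3 := IH (m+3) (by omega)
      obtain ⟨j, hj, hjm⟩ : ∃ j, j < 9 ∧ m % 9 = j := ⟨m % 9, Nat.mod_lt _ (by norm_num), rfl⟩
      rw [hjm] at H0
      rw [show (m+1) % 9 = (j+1) % 9 from by omega] at H1
      rw [show (m+2) % 9 = (j+2) % 9 from by omega] at H2
      rw [show (m+3) % 9 = (j+3) % 9 from by omega] at H3
      by_cases hj4 : j = 4
      · subst hj4
        rw [show (m+4) % 9 = 8 from by omega]
        obtain ⟨l, rfl⟩ : ∃ l, m = l + 1 := ⟨m - 1, by omega⟩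
        have H00 := IH l (by omega)
        rw [show l % 9 = 3 from by omega] at H00
        have hprod := S5 l
        rw [if_pos (show 3 ∣ (l+6) from by omega)] at hprod
        exact step5 (by norm_num) 3 (rseq 8) (by norm_num) hprod H00 H0 H1 H2 H3
          (by decide) (by decide)
      · rw [echo_add_four, show (m+4) % 9 = (j+4) % 9 from by omega,
          show (if 3 ∣ (m+4) then (3:ℚ) else 1) = (if 3 ∣ (j+4) then (3:ℚ) else 1) from by
            by_cases h : 3 ∣ (m+4)
            · rw [if_pos h, if_pos (show 3 ∣ (j+4) from by omega)]
            · rw [if_neg h, if_neg (show ¬ 3 ∣ (j+4) from by omega)]]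
        refine step4 (by norm_num) (if 3 ∣ (j+4) then 3 else 1) (rseq ((j+4) % 9))
          (by split <;> norm_num) H0 H1 H2 H3 ?_ ?_
        · interval_cases j <;> first | exact absurd rfl hj4 | decide
        · interval_cases j <;> first | exact absurd rfl hj4 | decide

/-- The denominator of each term of the ECHO sequence is coprime to 3, and the sequence is
periodic modulo 3 with the pattern (1, 1, 2, 1, 0, 2, 1, 2, 2) starting at multiples of 9. -/
theorem echo_periodic_mod_three :
    (∀ n : ℕ, ¬ (3 ∣ (echo n).den)) ∧
      ∀ n : ℕ, 9 ∣ n → ∀ i : ℕ, i ≤ 8 →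
        (3 : ℤ) ∣ (echo (n + i)).num - rseq i * ((echo (n + i)).den : ℤ) := by
  constructor
  · intro n hdvd
    obtain ⟨a, b, hb, he, hd⟩ := mod3 n
    have hbQ : (b : ℚ) ≠ 0 := by
      have : b ≠ 0 := fun h => hb (h ▸ dvd_zero 3)
      exact_mod_cast this
    have heq : echo n = (a : ℚ) / (b : ℚ) := by
      rw [← he]; field_simp
    have hden : ((echo n).den : ℤ) ∣ b := by
      rw [heq, ← Rat.divInt_eq_div]
      exact Rat.den_dvd a b
    exact hb (dvd_trans (by exact_mod_cast Int.natCast_dvd_natCast.mpr hdvd) hden)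
  · intro n h9 i hi
    obtain ⟨a, b, hb, he, hd⟩ := mod3 (n + i)
    rw [show (n + i) % 9 = i from by omega] at hd
    have hb0 : b ≠ 0 := fun h => hb (h ▸ dvd_zero 3)
    have hdQ : ((echo (n+i)).den : ℚ) ≠ 0 := by
      exact_mod_cast (echo (n+i)).den_ne_zero
    have hkey : (echo (n+i)).num * b = a * ((echo (n+i)).den : ℤ) := by
      have hq : ((echo (n+i)).num : ℚ) / ((echo (n+i)).den : ℚ) * (b:ℚ) = (a:ℚ) := by
        rw [Rat.num_div_den]; exact he
      field_simp at hq
      rw [mul_comm a]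
      exact_mod_cast hq
    have h1 : (3:ℤ) ∣ ((echo (n+i)).num - rseq i * ((echo (n+i)).den : ℤ)) * b := by
      have heq2 : ((echo (n+i)).num - rseq i * ((echo (n+i)).den : ℤ)) * b
          = (a - rseq i * b) * ((echo (n+i)).den : ℤ) := by linear_combination hkey
      rw [heq2]
      exact hd.mul_right _
    have hp : Prime (3:ℤ) := by norm_num
    rcases hp.dvd_mul.mp h1 with h | h
    · exact h
    · exact absurd h hb
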